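/- Let G and H be finite groups, A an abelian group, U ≤ G × H with p₁(U) = G and p₂(U) = H, and φ : U → A a homomorphism. Define φ₁ : k₁(U) → A by φ₁(g) = φ(g,1) and φ₂ : k₂(U) → A by φ₂(h) = φ(1,h)⁻¹. Then φ₁ extends to a homomorphism G → A if and only if φ₂ extends to a homomorphism H → A. -/

import Mathlib

theorem stmt_1 {G H A : Type*} [Group G] [Group H] [CommGroup A]
    [Finite G] [Finite H]
    (U : Subgroup (G × H))
    (hp1 : U.map (MonoidHom.fst G H) = ⊤)
    (hp2 : U.map (MonoidHom.snd G H) = ⊤)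
    (φ : ↥U →* A) :
    (∃ α : G →* A, ∀ (g : G) (hg : ((g, (1 : H)) : G × H) ∈ U), α g = φ ⟨(g, 1), hg⟩) ↔
      (∃ β : H →* A, ∀ (h : H) (hh : (((1 : G), h) : G × H) ∈ U),
        β h = (φ ⟨(1, h), hh⟩)⁻¹) := by
  classical
  have hex1 : ∀ g : G, ∃ h : H, ((g, h) : G × H) ∈ U := by
    intro g
    have : g ∈ U.map (MonoidHom.fst G H) := hp1 ▸ Subgroup.mem_top g
    obtain ⟨u, hu, rfl⟩ := this
    exact ⟨u.2, by simpa using hu⟩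
  have hex2 : ∀ h : H, ∃ g : G, ((g, h) : G × H) ∈ U := by
    intro h
    have : h ∈ U.map (MonoidHom.snd G H) := hp2 ▸ Subgroup.mem_top h
    obtain ⟨u, hu, rfl⟩ := this
    exact ⟨u.1, by simpa using hu⟩
  constructor
  · rintro ⟨α, hα⟩
    have wd : ∀ (h : H) (g g' : G) (hg : ((g, h) : G × H) ∈ U)
        (hg' : ((g', h) : G × H) ∈ U),
        α g * (φ ⟨(g, h), hg⟩)⁻¹ = α g' * (φ ⟨(g', h), hg'⟩)⁻¹ := by
      intro h g g' hg hg'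
      have hmem : ((g * g'⁻¹, (1 : H)) : G × H) ∈ U := by
        have := U.mul_mem hg (U.inv_mem hg')
        simpa using this
      have h1 : α (g * g'⁻¹) = φ ⟨(g * g'⁻¹, 1), hmem⟩ := hα _ hmem
      have h2 : (⟨(g, h), hg⟩ : U) = ⟨(g * g'⁻¹, 1), hmem⟩ * ⟨(g', h), hg'⟩ := by
        ext <;> simp
      have h3 : φ ⟨(g, h), hg⟩ = φ ⟨(g * g'⁻¹, 1), hmem⟩ * φ ⟨(g', h), hg'⟩ := by
        rw [h2, map_mul]
      have h4 : α g = α (g * g'⁻¹) * α g' := by rw [← map_mul]; group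
      rw [h4, h1, h3]
      simp [mul_inv_rev, mul_comm, mul_left_comm, mul_assoc]
    refine ⟨MonoidHom.mk' (fun h => α (hex2 h).choose *
        (φ ⟨((hex2 h).choose, h), (hex2 h).choose_spec⟩)⁻¹) ?_, ?_⟩
    · intro h h'
      set g := (hex2 h).choose with hgdef
      set g' := (hex2 h').choose with hg'def
      have hg : ((g, h) : G × H) ∈ U := (hex2 h).choose_spec
      have hg' : ((g', h') : G × H) ∈ U := (hex2 h').choose_spec
      have hmm : ((g * g', h * h') : G × H) ∈ U := U.mul_mem hg hg'
      have := wd (h * h') (hex2 (h * h')).choose (g * g') (hex2 (h * h')).choose_spec hmm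
      rw [this]
      have h2 : (⟨(g * g', h * h'), hmm⟩ : U) = ⟨(g, h), hg⟩ * ⟨(g', h'), hg'⟩ := rfl
      rw [h2, map_mul, map_mul]
      simp [mul_inv_rev, mul_comm, mul_left_comm, mul_assoc]
      rfl
    · intro h hh
      have := wd h (hex2 h).choose 1 (hex2 h).choose_spec hh
      simpa using this
  · rintro ⟨β, hβ⟩
    have wd : ∀ (g : G) (h h' : H) (hh : ((g, h) : G × H) ∈ U)
        (hh' : ((g, h') : G × H) ∈ U),
        β h * φ ⟨(g, h), hh⟩ = β h' * φ ⟨(g, h'), hh'⟩ := by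
      intro g h h' hh hh'
      have hmem : (((1 : G), h⁻¹ * h') : G × H) ∈ U := by
        have := U.mul_mem (U.inv_mem hh) hh'
        simpa using this
      have h1 : β (h⁻¹ * h') = (φ ⟨(1, h⁻¹ * h'), hmem⟩)⁻¹ := hβ _ hmem
      have h2 : (⟨(g, h'), hh'⟩ : U) = ⟨(g, h), hh⟩ * ⟨(1, h⁻¹ * h'), hmem⟩ := by
        ext <;> simp
      have h3 : φ ⟨(g, h'), hh'⟩ = φ ⟨(g, h), hh⟩ * φ ⟨(1, h⁻¹ * h'), hmem⟩ := by
        rw [h2, map_mul]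
      have h4 : β h' = β h * β (h⁻¹ * h') := by rw [← map_mul]; group
      rw [h4, h1, h3]
      simp [mul_inv_rev, mul_comm, mul_left_comm, mul_assoc]
    refine ⟨MonoidHom.mk' (fun g => β (hex1 g).choose *
        φ ⟨(g, (hex1 g).choose), (hex1 g).choose_spec⟩) ?_, ?_⟩
    · intro g g'
      set h := (hex1 g).choose with hhdef
      set h' := (hex1 g').choose with hh'def
      have hh : ((g, h) : G × H) ∈ U := (hex1 g).choose_spec
      have hh' : ((g', h') : G × H) ∈ U := (hex1 g').choose_spec
      have hmm : ((g * g', h * h') : G × H) ∈ U := U.mul_mem hh hh'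
      have := wd (g * g') (hex1 (g * g')).choose (h * h') (hex1 (g * g')).choose_spec hmm
      rw [this]
      have h2 : (⟨(g * g', h * h'), hmm⟩ : U) = ⟨(g, h), hh⟩ * ⟨(g', h'), hh'⟩ := rfl
      rw [h2, map_mul, map_mul]
      simp [mul_comm, mul_left_comm, mul_assoc]
      rfl
    · intro g hg
      have := wd g (hex1 g).choose 1 (hex1 g).choose_spec hg
      simpa using this
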